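/- For any weight matrices W₀, …, W_ℓ and any diagonal matrices D_r with diagonal entries in [0,1], one has ‖W_ℓ D_ℓ W_{ℓ-1} D_{ℓ-1} ⋯ D₁ W₀‖ ≤ K₁, where K₁ = (1/2^ℓ) Σ over all subsets {r₁ < r₂ < ⋯ < r_n} of {1,…,ℓ} of ‖W_{(ℓ+1,r_n)}‖ ‖W_{(r_n,r_{n-1})}‖ ⋯ ‖W_{(r₂,r₁)}‖ ‖W_{(r₁,0)}‖ (the Combettes–Pesquet bound). -/

import Mathlib

/-- Entrywise absolute value of a matrix. -/
def entAbs {m n : ℕ} (A : Matrix (Fin m) (Fin n) ℝ) : Matrix (Fin m) (Fin n) ℝ :=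
  fun i j => |A i j|

/-- The chunk product `W (s+k) * ⋯ * W (s+1) * W s`. -/
def Wchunk (a : ℕ → ℕ) (W : ∀ r : ℕ, Matrix (Fin (a (r+1))) (Fin (a r)) ℝ) (s : ℕ) :
    (k : ℕ) → Matrix (Fin (a (s + k + 1))) (Fin (a s)) ℝ
  | 0 => W s
  | k+1 => W (s + k + 1) * Wchunk a W s k

/-- The chunk product `W_{(t,s)} = W (t-1) * ⋯ * W s` for `s < t`, cast to its natural type. -/
def Wts (a : ℕ → ℕ) (W : ∀ r : ℕ, Matrix (Fin (a (r+1))) (Fin (a r)) ℝ) (s t : ℕ) :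
    Matrix (Fin (a t)) (Fin (a s)) ℝ :=
  if h : s < t then
    (Wchunk a W s (t - s - 1)).submatrix
      (Fin.cast (congrArg a (by omega : t = s + (t - s - 1) + 1))) id
  else 0

/-- Given a decreasing list `[r_n, …, r_1]` of cut points, the product
`nn (W_{(t,r_n)}) * nn (W_{(r_n,r_{n-1})}) * ⋯ * nn (W_{(r_1,0)})` of chunk norms. -/
noncomputable def chunkNormProd (a : ℕ → ℕ)
    (W : ∀ r : ℕ, Matrix (Fin (a (r+1))) (Fin (a r)) ℝ)
    (nn : ∀ m n : ℕ, Matrix (Fin m) (Fin n) ℝ → ℝ) : ℕ → List ℕ → ℝ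
  | t, [] => nn (a t) (a 0) (Wts a W 0 t)
  | t, r :: rest => nn (a t) (a r) (Wts a W r t) * chunkNormProd a W nn r rest

/-- The Combettes–Pesquet bound `K₁`, for the norm `nn`. -/
noncomputable def K1 (a : ℕ → ℕ) (W : ∀ r : ℕ, Matrix (Fin (a (r+1))) (Fin (a r)) ℝ)
    (nn : ∀ m n : ℕ, Matrix (Fin m) (Fin n) ℝ → ℝ) (ℓ : ℕ) : ℝ :=
  (1 / 2 ^ ℓ) * ∑ S ∈ (Finset.Icc 1 ℓ).powerset,
    chunkNormProd a W nn (ℓ + 1) ((S.sort (· ≤ ·)).reverse)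

/-- Given a decreasing list `[r_n, …, r_1]` of cut points, the matrix product
`W_{(t,r_n)}^abs * W_{(r_n,r_{n-1})}^abs * ⋯ * W_{(r_1,0)}^abs`. -/
noncomputable def chunkAbsProd (a : ℕ → ℕ)
    (W : ∀ r : ℕ, Matrix (Fin (a (r+1))) (Fin (a r)) ℝ) :
    (t : ℕ) → List ℕ → Matrix (Fin (a t)) (Fin (a 0)) ℝ
  | t, [] => entAbs (Wts a W 0 t)
  | t, r :: rest => entAbs (Wts a W r t) * chunkAbsProd a W r rest

/-- The bound `K₄`, for the norm `nn`. -/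
noncomputable def K4 (a : ℕ → ℕ) (W : ∀ r : ℕ, Matrix (Fin (a (r+1))) (Fin (a r)) ℝ)
    (nn : ∀ m n : ℕ, Matrix (Fin m) (Fin n) ℝ → ℝ) (ℓ : ℕ) : ℝ :=
  (1 / 2 ^ ℓ) * ∑ S ∈ (Finset.Icc 1 ℓ).powerset,
    nn (a (ℓ+1)) (a 0) (chunkAbsProd a W (ℓ + 1) ((S.sort (· ≤ ·)).reverse))

/-- The product `W ℓ * D ℓ * W (ℓ-1) * D (ℓ-1) * ⋯ * D 1 * W 0`. -/
def chainWD (a : ℕ → ℕ) (W : ∀ r : ℕ, Matrix (Fin (a (r+1))) (Fin (a r)) ℝ)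
    (D : ∀ r : ℕ, Matrix (Fin (a r)) (Fin (a r)) ℝ) :
    (k : ℕ) → Matrix (Fin (a (k+1))) (Fin (a 0)) ℝ
  | 0 => W 0
  | k+1 => W (k+1) * (D (k+1) * chainWD a W D k)

section Aux

variable (a : ℕ → ℕ) (W : ∀ r : ℕ, Matrix (Fin (a (r+1))) (Fin (a r)) ℝ)
  (nn : ∀ m n : ℕ, Matrix (Fin m) (Fin n) ℝ → ℝ)

lemma chunk_congr (s : ℕ) {k k' : ℕ} (h : k = k') :
    HEq (Wchunk a W s k) (Wchunk a W s k') := by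
  subst h; rfl

lemma submatrix_cast_eq {n p q : ℕ} (h : q = p) (A : Matrix (Fin p) (Fin n) ℝ)
    (B : Matrix (Fin q) (Fin n) ℝ) (hAB : HEq A B) :
    A.submatrix (Fin.cast h) id = B := by
  subst h
  have hab : A = B := eq_of_heq hAB
  subst hab
  have : (Fin.cast (rfl : q = q) : Fin q → Fin q) = id := by funext i; rfl
  simp [this]

lemma Wts_add (s k : ℕ) : Wts a W s (s+k+1) = Wchunk a W s k := by
  rw [Wts, dif_pos (show s < s+k+1 by omega)]
  exact submatrix_cast_eq _ _ _ (chunk_congr a W s (by omega))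

lemma Wts_single (s : ℕ) : Wts a W s (s+1) = W s := Wts_add a W s 0

lemma Wts_succ (s t : ℕ) (h : s < t) : Wts a W s (t+1) = W t * Wts a W s t := by
  obtain ⟨k, rfl⟩ : ∃ k, t = s + k + 1 := ⟨t - s - 1, by omega⟩
  rw [Wts_add a W s k]
  exact Wts_add a W s (k+1)

lemma sort_insert_max {x : ℕ} {s : Finset ℕ} (h1 : ∀ b ∈ s, b ≤ x) (h2 : x ∉ s) :
    (insert x s).sort (· ≤ ·) = s.sort (· ≤ ·) ++ [x] := by
  have p1 : List.Perm ((insert x s).sort (· ≤ ·)) (x :: s.sort (· ≤ ·)) := by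
    refine (Finset.sort_perm_toList _ _).trans ?_
    refine (Finset.toList_insert h2).trans ?_
    exact ((Finset.sort_perm_toList s _).symm.cons x)
  have p2 : List.Perm ((insert x s).sort (· ≤ ·)) (s.sort (· ≤ ·) ++ [x]) :=
    p1.trans (List.perm_append_singleton x _).symm
  have s2 : List.Pairwise (· ≤ ·) (s.sort (· ≤ ·) ++ [x]) := by
    rw [List.pairwise_append]
    refine ⟨Finset.pairwise_sort _ _, List.pairwise_singleton _ x, ?_⟩
    intro b hb y hy
    simp only [List.mem_singleton] at hy
    subst hy
    exact h1 b ((Finset.mem_sort _).mp hb)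
  exact List.Perm.eq_of_pairwise' (Finset.pairwise_sort _ _) s2 p2

/-- `K₁`-style product whose top chunk is multiplied by an extra matrix `M`. -/
noncomputable def topProd (m ℓ : ℕ) (M : Matrix (Fin m) (Fin (a (ℓ+1))) ℝ) :
    List ℕ → ℝ
  | [] => nn m (a 0) (M * Wts a W 0 (ℓ+1))
  | r :: rest => nn m (a r) (M * Wts a W r (ℓ+1)) * chunkNormProd a W nn r rest

variable (hnonneg : ∀ m n (A : Matrix (Fin m) (Fin n) ℝ), 0 ≤ nn m n A)
  (hadd : ∀ m n (A B : Matrix (Fin m) (Fin n) ℝ), nn m n (A + B) ≤ nn m n A + nn m n B)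
  (hsmul : ∀ m n (c : ℝ) (A : Matrix (Fin m) (Fin n) ℝ), nn m n (c • A) = |c| * nn m n A)
  (hmul : ∀ m n p (A : Matrix (Fin m) (Fin n) ℝ) (B : Matrix (Fin n) (Fin p) ℝ),
      nn m p (A * B) ≤ nn m n A * nn n p B)

include hnonneg in
lemma chunkNormProd_nonneg : ∀ (L : List ℕ) (t : ℕ), 0 ≤ chunkNormProd a W nn t L := by
  intro L
  induction L with
  | nil => intro t; exact hnonneg _ _ _
  | cons r rest ih => intro t; exact mul_nonneg (hnonneg _ _ _) (ih r)

lemma topProd_one (ℓ : ℕ) (L : List ℕ) :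
    topProd a W nn (a (ℓ+1)) ℓ 1 L = chunkNormProd a W nn (ℓ+1) L := by
  cases L <;> simp [topProd, chunkNormProd, Matrix.one_mul]

lemma topProd_shift (m ℓ : ℕ) (M : Matrix (Fin m) (Fin (a (ℓ+1+1))) ℝ)
    (L : List ℕ) (hL : ∀ r ∈ L, r < ℓ+1) :
    topProd a W nn m ℓ (M * W (ℓ+1)) L = topProd a W nn m (ℓ+1) M L := by
  cases L with
  | nil =>
    show nn m (a 0) ((M * W (ℓ+1)) * Wts a W 0 (ℓ+1)) = nn m (a 0) (M * Wts a W 0 (ℓ+1+1))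
    rw [Wts_succ a W 0 (ℓ+1) (by omega), ← Matrix.mul_assoc]
  | cons r rest =>
    show nn m (a r) ((M * W (ℓ+1)) * Wts a W r (ℓ+1)) * _ = nn m (a r) (M * Wts a W r (ℓ+1+1)) * _
    rw [Wts_succ a W r (ℓ+1) (hL r (by simp)), ← Matrix.mul_assoc]

lemma topProd_cut (m ℓ : ℕ) (M : Matrix (Fin m) (Fin (a (ℓ+1+1))) ℝ) (rest : List ℕ) :
    topProd a W nn m (ℓ+1) M ((ℓ+1) :: rest) =
      nn m (a (ℓ+1)) (M * W (ℓ+1)) * chunkNormProd a W nn (ℓ+1) rest := by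
  show nn m (a (ℓ+1)) (M * Wts a W (ℓ+1) (ℓ+1+1)) * _ = _
  rw [Wts_single a W (ℓ+1)]

include hnonneg hmul in
lemma topProd_Z_le (ℓ : ℕ) (Z : Matrix (Fin (a (ℓ+1))) (Fin (a (ℓ+1))) ℝ)
    (hZ : nn (a (ℓ+1)) (a (ℓ+1)) Z ≤ 1) (L : List ℕ) :
    topProd a W nn (a (ℓ+1)) ℓ Z L ≤ chunkNormProd a W nn (ℓ+1) L := by
  cases L with
  | nil =>
    show nn _ (a 0) (Z * Wts a W 0 (ℓ+1)) ≤ nn _ (a 0) (Wts a W 0 (ℓ+1))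
    calc nn _ (a 0) (Z * Wts a W 0 (ℓ+1)) ≤ nn _ _ Z * nn _ _ (Wts a W 0 (ℓ+1)) :=
          hmul _ _ _ _ _
      _ ≤ 1 * nn _ _ (Wts a W 0 (ℓ+1)) :=
          mul_le_mul_of_nonneg_right hZ (hnonneg _ _ _)
      _ = _ := one_mul _
  | cons r rest =>
    show nn _ (a r) (Z * Wts a W r (ℓ+1)) * chunkNormProd a W nn r rest ≤
      nn _ (a r) (Wts a W r (ℓ+1)) * chunkNormProd a W nn r rest
    refine mul_le_mul_of_nonneg_right ?_ (chunkNormProd_nonneg a W nn hnonneg rest r)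
    calc nn _ (a r) (Z * Wts a W r (ℓ+1)) ≤ nn _ _ Z * nn _ _ (Wts a W r (ℓ+1)) :=
          hmul _ _ _ _ _
      _ ≤ 1 * nn _ _ (Wts a W r (ℓ+1)) :=
          mul_le_mul_of_nonneg_right hZ (hnonneg _ _ _)
      _ = _ := one_mul _

variable (hdiag : ∀ k (Z : Matrix (Fin k) (Fin k) ℝ),
      (∀ i j, i ≠ j → Z i j = 0) → (∀ i, |Z i i| ≤ 1) → nn k k Z ≤ 1)
  (D : ∀ r : ℕ, Matrix (Fin (a r)) (Fin (a r)) ℝ)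
  (hD0 : ∀ r i j, i ≠ j → D r i j = 0)
  (hD1 : ∀ r i, D r i i ∈ Set.Icc (0:ℝ) 1)

include hnonneg hadd hsmul hmul hdiag hD0 hD1 in
lemma main_bound : ∀ (ℓ m : ℕ) (M : Matrix (Fin m) (Fin (a (ℓ+1))) ℝ),
    nn m (a 0) (M * chainWD a W D ℓ) ≤
      (1/2^ℓ) * ∑ S ∈ (Finset.Icc 1 ℓ).powerset,
        topProd a W nn m ℓ M ((S.sort (· ≤ ·)).reverse) := by
  intro ℓ
  induction ℓ with
  | zero =>
    intro m M
    have : Finset.Icc 1 0 = (∅ : Finset ℕ) := by simp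
    rw [this]
    simp only [Finset.powerset_empty, Finset.sum_singleton, Finset.sort_empty,
      List.reverse_nil, pow_zero]
    show nn m (a 0) (M * W 0) ≤ 1/1 * nn m (a 0) (M * Wts a W 0 (0+1))
    rw [Wts_single a W 0]
    simp
  | succ ℓ ih =>
    intro m M
    set Z : Matrix (Fin (a (ℓ+1))) (Fin (a (ℓ+1))) ℝ := (2:ℝ) • D (ℓ+1) - 1 with hZdef
    have hZ : nn (a (ℓ+1)) (a (ℓ+1)) Z ≤ 1 := by
      apply hdiag
      · intro i j hij
        simp [hZdef, Matrix.sub_apply, Matrix.smul_apply, hD0 (ℓ+1) i j hij,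
          Matrix.one_apply_ne hij]
      · intro i
        have h := hD1 (ℓ+1) i
        simp only [Set.mem_Icc] at h
        simp only [hZdef, Matrix.sub_apply, Matrix.smul_apply, Matrix.one_apply_eq,
          smul_eq_mul]
        rw [abs_le]
        constructor <;> nlinarith [h.1, h.2]
    have hDrw : D (ℓ+1) = (1/2:ℝ) • ((1 : Matrix (Fin (a (ℓ+1))) (Fin (a (ℓ+1))) ℝ) + Z) := by
      rw [hZdef]
      module
    have hdec : M * chainWD a W D (ℓ+1) =
        (1/2:ℝ) • ((M * W (ℓ+1)) * chainWD a W D ℓ) +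
        (1/2:ℝ) • ((M * W (ℓ+1)) * (Z * chainWD a W D ℓ)) := by
      show M * (W (ℓ+1) * (D (ℓ+1) * chainWD a W D ℓ)) = _
      rw [hDrw, ← Matrix.mul_assoc, Matrix.smul_mul, Matrix.add_mul, Matrix.one_mul,
        Matrix.mul_smul, Matrix.mul_add, smul_add, ← Matrix.mul_assoc]
    have h1 : nn m (a 0) (M * chainWD a W D (ℓ+1)) ≤
        (1/2) * nn m (a 0) ((M * W (ℓ+1)) * chainWD a W D ℓ) +
        (1/2) * nn m (a 0) ((M * W (ℓ+1)) * (Z * chainWD a W D ℓ)) := by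
      rw [hdec]
      refine (hadd _ _ _ _).trans ?_
      rw [hsmul, hsmul]
      rw [abs_of_nonneg (by norm_num : (0:ℝ) ≤ 1/2)]
    -- term A
    have hA : nn m (a 0) ((M * W (ℓ+1)) * chainWD a W D ℓ) ≤
        (1/2^ℓ) * ∑ S ∈ (Finset.Icc 1 ℓ).powerset,
          topProd a W nn m (ℓ+1) M ((S.sort (· ≤ ·)).reverse) := by
      refine (ih m (M * W (ℓ+1))).trans (le_of_eq ?_)
      congr 1
      refine Finset.sum_congr rfl (fun S hS => ?_)
      refine topProd_shift a W nn m ℓ M _ (fun r hr => ?_)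
      rw [List.mem_reverse, Finset.mem_sort] at hr
      have := Finset.mem_powerset.mp hS hr
      simp only [Finset.mem_Icc] at this
      omega
    -- term B
    have hB : nn m (a 0) ((M * W (ℓ+1)) * (Z * chainWD a W D ℓ)) ≤
        nn m (a (ℓ+1)) (M * W (ℓ+1)) *
          ((1/2^ℓ) * ∑ S ∈ (Finset.Icc 1 ℓ).powerset,
            chunkNormProd a W nn (ℓ+1) ((S.sort (· ≤ ·)).reverse)) := by
      refine (hmul _ _ _ _ _).trans ?_
      refine mul_le_mul_of_nonneg_left ?_ (hnonneg _ _ _)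
      refine (ih (a (ℓ+1)) Z).trans ?_
      refine mul_le_mul_of_nonneg_left ?_ (by positivity)
      refine Finset.sum_le_sum (fun S hS => ?_)
      exact topProd_Z_le a W nn hnonneg hmul ℓ Z hZ _
    -- RHS rewriting
    have hnotmem : (ℓ+1) ∉ Finset.Icc 1 ℓ := by simp
    have hIcc : Finset.Icc 1 (ℓ+1) = insert (ℓ+1) (Finset.Icc 1 ℓ) := by
      ext x; simp only [Finset.mem_Icc, Finset.mem_insert]; omega
    have hsplit : ∑ S ∈ (Finset.Icc 1 (ℓ+1)).powerset,
        topProd a W nn m (ℓ+1) M ((S.sort (· ≤ ·)).reverse) =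
        (∑ S ∈ (Finset.Icc 1 ℓ).powerset,
          topProd a W nn m (ℓ+1) M ((S.sort (· ≤ ·)).reverse)) +
        (∑ S ∈ (Finset.Icc 1 ℓ).powerset,
          nn m (a (ℓ+1)) (M * W (ℓ+1)) * chunkNormProd a W nn (ℓ+1) ((S.sort (· ≤ ·)).reverse)) := by
      rw [hIcc, Finset.sum_powerset_insert hnotmem]
      congr 1
      refine Finset.sum_congr rfl (fun S hS => ?_)
      have hsub := Finset.mem_powerset.mp hS
      have hmax : ∀ b ∈ S, b ≤ ℓ+1 := by
        intro b hb
        have := hsub hb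
        simp only [Finset.mem_Icc] at this
        omega
      have hnm : (ℓ+1) ∉ S := fun h => hnotmem (hsub h)
      rw [sort_insert_max hmax hnm, List.reverse_append, List.reverse_singleton,
        List.singleton_append]
      exact topProd_cut a W nn m ℓ M _
    rw [hsplit]
    have hpow : (1:ℝ)/2^(ℓ+1) = (1/2) * (1/2^ℓ) := by ring
    calc nn m (a 0) (M * chainWD a W D (ℓ+1)) ≤ _ := h1
      _ ≤ (1/2) * ((1/2^ℓ) * ∑ S ∈ (Finset.Icc 1 ℓ).powerset,
            topProd a W nn m (ℓ+1) M ((S.sort (· ≤ ·)).reverse)) +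
          (1/2) * (nn m (a (ℓ+1)) (M * W (ℓ+1)) *
            ((1/2^ℓ) * ∑ S ∈ (Finset.Icc 1 ℓ).powerset,
              chunkNormProd a W nn (ℓ+1) ((S.sort (· ≤ ·)).reverse))) := by
          refine add_le_add ?_ ?_
          · exact mul_le_mul_of_nonneg_left hA (by norm_num)
          · exact mul_le_mul_of_nonneg_left hB (by norm_num)
      _ = (1/2^(ℓ+1)) * ((∑ S ∈ (Finset.Icc 1 ℓ).powerset,
            topProd a W nn m (ℓ+1) M ((S.sort (· ≤ ·)).reverse)) +
          (∑ S ∈ (Finset.Icc 1 ℓ).powerset,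
            nn m (a (ℓ+1)) (M * W (ℓ+1)) * chunkNormProd a W nn (ℓ+1) ((S.sort (· ≤ ·)).reverse))) := by
          rw [← Finset.mul_sum]
          ring

end Aux

/-- Combettes–Pesquet bound: for any operator norm `nn` (subadditive, absolutely
homogeneous, submultiplicative, with `nn Z ≤ 1` for diagonal `Z` with entries in `[-1,1]`)
and any diagonal matrices `D r` with entries in `[0,1]`,
`‖W ℓ D ℓ ⋯ D 1 W 0‖ ≤ K₁`. -/
theorem chain_norm_le_K1
    (a : ℕ → ℕ) (ℓ : ℕ) (W : ∀ r : ℕ, Matrix (Fin (a (r+1))) (Fin (a r)) ℝ)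
    (nn : ∀ m n : ℕ, Matrix (Fin m) (Fin n) ℝ → ℝ)
    (hnonneg : ∀ m n (A : Matrix (Fin m) (Fin n) ℝ), 0 ≤ nn m n A)
    (hadd : ∀ m n (A B : Matrix (Fin m) (Fin n) ℝ), nn m n (A + B) ≤ nn m n A + nn m n B)
    (hsmul : ∀ m n (c : ℝ) (A : Matrix (Fin m) (Fin n) ℝ), nn m n (c • A) = |c| * nn m n A)
    (hmul : ∀ m n p (A : Matrix (Fin m) (Fin n) ℝ) (B : Matrix (Fin n) (Fin p) ℝ),
      nn m p (A * B) ≤ nn m n A * nn n p B)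
    (hdiag : ∀ k (Z : Matrix (Fin k) (Fin k) ℝ),
      (∀ i j, i ≠ j → Z i j = 0) → (∀ i, |Z i i| ≤ 1) → nn k k Z ≤ 1)
    (D : ∀ r : ℕ, Matrix (Fin (a r)) (Fin (a r)) ℝ)
    (hD0 : ∀ r i j, i ≠ j → D r i j = 0)
    (hD1 : ∀ r i, D r i i ∈ Set.Icc (0:ℝ) 1) :
    nn (a (ℓ+1)) (a 0) (chainWD a W D ℓ) ≤ K1 a W nn ℓ := by
  have h := main_bound a W nn hnonneg hadd hsmul hmul hdiag D hD0 hD1 ℓ (a (ℓ+1)) 1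
  rw [Matrix.one_mul] at h
  refine h.trans (le_of_eq ?_)
  rw [K1]
  congr 1
  exact Finset.sum_congr rfl (fun S hS => topProd_one a W nn ℓ _)
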